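/- Assume E(|u|²) < ∞ μ-a.e. and let v = E(u). If for every f ∈ D(EM_u) with E(|u|²)·(EM_u f) ∈ L²(μ) one has E(|u|²)·(EM_u f) = ū·v·(EM_u f) μ-a.e. (i.e., EM_u|EM_u|² ⊆ |EM_u|²EM_u, quasinormality of EM_u), then ū·v = E(|u|²) μ-a.e. on the set {x : v(x) ≠ 0}. -/

import Mathlib

open MeasureTheory Filter ENNReal NNReal

noncomputable section

variable {X : Type*}

/-- A set `A` in the sub-σ-algebra `m` is *admissible* for the weight `u` if
`μ A + ∫_A |u|² dμ < ∞`. -/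
def Admissible (m : MeasurableSpace X) [m0 : MeasurableSpace X] (μ : Measure X)
    (u : X → ℂ) (A : Set X) : Prop :=
  MeasurableSet[m] A ∧ μ A + ∫⁻ x in A, (‖u x‖₊ : ℝ≥0∞) ^ 2 ∂μ < ⊤

/-- `gf` is a version of `E(u·f)`, i.e. `gf` is an `m`-measurable function in `L²(μ)` with
`∫_A u·f dμ = ∫_A gf dμ` for every admissible `A`.  `f ∈ D(EM_u)` iff `f ∈ L²(μ)` and such a
`gf` exists. -/
def IsWCE (m : MeasurableSpace X) [m0 : MeasurableSpace X] (μ : Measure X)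
    (u f gf : X → ℂ) : Prop :=
  StronglyMeasurable[m] gf ∧ MemLp gf 2 μ ∧
    ∀ A : Set X, Admissible m μ u A → ∫ x in A, u x * f x ∂μ = ∫ x in A, gf x ∂μ

/-- With `E(|u|²) < ∞` a.e. and `v = E(u)`, if
`E(|u|²)·(EM_u f) = ū·v·(EM_u f)` a.e. for every `f ∈ D(EM_u)` with
`E(|u|²)·(EM_u f) ∈ L²(μ)` (quasinormality of `EM_u`), then `ū·v = E(|u|²)` a.e. on
`{v ≠ 0}`. -/
theorem stmt15 (m : MeasurableSpace X) [m0 : MeasurableSpace X] (hm : m ≤ m0)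
    (μ : Measure X) [SigmaFinite μ] [SigmaFinite (μ.trim hm)]
    (u : X → ℂ) (hu : Measurable u)
    (g : X → ℝ≥0∞) (hgm : Measurable[m] g)
    (hg : ∀ A : Set X, MeasurableSet[m] A →
      ∫⁻ x in A, (‖u x‖₊ : ℝ≥0∞) ^ 2 ∂μ = ∫⁻ x in A, g x ∂μ)
    (hgfin : ∀ᵐ x ∂μ, g x < ⊤)
    (v : X → ℂ) (hvm : StronglyMeasurable[m] v)
    (hv : ∀ A : Set X, Admissible m μ u A → ∫ x in A, u x ∂μ = ∫ x in A, v x ∂μ)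
    (hqn : ∀ f gf : X → ℂ, MemLp f 2 μ → IsWCE m μ u f gf →
      MemLp (fun x => ((g x).toReal : ℂ) * gf x) 2 μ →
      (fun x => ((g x).toReal : ℂ) * gf x) =ᵐ[μ]
        fun x => (starRingEnd ℂ) (u x) * v x * gf x) :
    ∀ᵐ x ∂μ, v x ≠ 0 → (starRingEnd ℂ) (u x) * v x = ((g x).toReal : ℂ) := by
  classical
  set S : ℕ → Set X := fun n =>
    (spanningSets (μ.trim hm) n ∩ {x | g x ≤ (n : ℝ≥0∞)}) ∩ {x | ‖v x‖ ≤ (n : ℝ)} with hSdef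
  have hSm : ∀ n, MeasurableSet[m] (S n) := fun n =>
    ((measurableSet_spanningSets (μ.trim hm) n).inter (hgm measurableSet_Iic)).inter
      (hvm.norm.measurable measurableSet_Iic)
  have hSfin : ∀ n, μ (S n) < ⊤ := by
    intro n
    calc μ (S n) ≤ μ (spanningSets (μ.trim hm) n) :=
          measure_mono (fun x hx => hx.1.1)
    _ = (μ.trim hm) (spanningSets (μ.trim hm) n) :=
          (trim_measurableSet_eq hm (measurableSet_spanningSets (μ.trim hm) n)).symm
    _ < ⊤ := measure_spanningSets_lt_top (μ.trim hm) n
  have hSadm : ∀ n, Admissible m μ u (S n) := by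
    intro n
    refine ⟨hSm n, ?_⟩
    have h1 : ∫⁻ x in S n, (‖u x‖₊ : ℝ≥0∞) ^ 2 ∂μ = ∫⁻ x in S n, g x ∂μ := hg _ (hSm n)
    have h2 : ∫⁻ x in S n, g x ∂μ ≤ (n : ℝ≥0∞) * μ (S n) := by
      calc ∫⁻ x in S n, g x ∂μ ≤ ∫⁻ _ in S n, (n : ℝ≥0∞) ∂μ :=
            setLIntegral_mono' (hm _ (hSm n)) (fun x hx => hx.1.2)
      _ = (n : ℝ≥0∞) * μ (S n) := setLIntegral_const _ _
    have h3 : (n : ℝ≥0∞) * μ (S n) < ⊤ :=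
      ENNReal.mul_lt_top (by simp) (hSfin n)
    exact ENNReal.add_lt_top.mpr ⟨hSfin n, lt_of_le_of_lt (h1 ▸ h2) h3⟩
  have key : ∀ n, ∀ᵐ x ∂μ, x ∈ S n →
      (starRingEnd ℂ) (u x) * v x * v x = ((g x).toReal : ℂ) * v x := by
    intro n
    set A := S n with hA
    have hAm : MeasurableSet[m] A := hSm n
    have hAm0 : MeasurableSet A := hm _ hAm
    have hAfin : μ A ≠ ⊤ := (hSfin n).ne
    set f : X → ℂ := A.indicator (fun _ => 1) with hf
    set gf : X → ℂ := A.indicator v with hgf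
    have hfL2 : MemLp f 2 μ := memLp_indicator_const 2 hAm0 1 (Or.inr hAfin)
    have hgfms : AEStronglyMeasurable gf μ :=
      ((hvm.mono hm).indicator hAm0).aestronglyMeasurable
    have hboundv : ∀ x, ‖gf x‖ ≤ ‖A.indicator (fun _ => (n : ℝ)) x‖ := by
      intro x; by_cases hx : x ∈ A
      · simp only [hgf, Set.indicator_of_mem hx]
        calc ‖v x‖ ≤ (n : ℝ) := hx.2
        _ ≤ ‖(n : ℝ)‖ := le_abs_self _
      · simp [hgf, Set.indicator_of_notMem hx]
    have hgfL2 : MemLp gf 2 μ :=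
      MemLp.of_le (memLp_indicator_const 2 hAm0 (n : ℝ) (Or.inr hAfin)) hgfms
        (Filter.Eventually.of_forall hboundv)
    have hWCE : IsWCE m μ u f gf := by
      refine ⟨hvm.indicator hAm, hgfL2, ?_⟩
      intro B hB
      have hBA : Admissible m μ u (B ∩ A) := by
        refine ⟨hB.1.inter hAm, ?_⟩
        exact lt_of_le_of_lt
          (add_le_add (measure_mono Set.inter_subset_left)
            (lintegral_mono_set Set.inter_subset_left)) hB.2
      have h1 : ∫ x in B, u x * f x ∂μ = ∫ x in B ∩ A, u x ∂μ := by
        rw [show (fun x => u x * f x) = A.indicator u by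
          funext x; by_cases hx : x ∈ A <;> simp [hf, hx]]
        exact setIntegral_indicator hAm0
      have h2 : ∫ x in B, gf x ∂μ = ∫ x in B ∩ A, v x ∂μ := setIntegral_indicator hAm0
      rw [h1, h2]; exact hv _ hBA
    have hGms : AEStronglyMeasurable (fun x => ((g x).toReal : ℂ) * gf x) μ := by
      have hgmeas : Measurable g := hgm.mono hm le_rfl
      exact (Complex.measurable_ofReal.comp hgmeas.ennreal_toReal).aestronglyMeasurable.mul hgfms
    have hGbound : ∀ x, ‖((g x).toReal : ℂ) * gf x‖ ≤
        ‖A.indicator (fun _ => ((n : ℝ) * n)) x‖ := by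
      intro x; by_cases hx : x ∈ A
      · simp only [hgf, Set.indicator_of_mem hx, norm_mul]
        have hg1 : ‖((g x).toReal : ℂ)‖ ≤ (n : ℝ) := by
          rw [Complex.norm_real, Real.norm_eq_abs, abs_of_nonneg ENNReal.toReal_nonneg]
          have := ENNReal.toReal_mono (by simp : (n : ℝ≥0∞) ≠ ⊤) hx.1.2
          simpa using this
        have hv1 : ‖v x‖ ≤ (n : ℝ) := hx.2
        calc ‖((g x).toReal : ℂ)‖ * ‖v x‖ ≤ (n : ℝ) * n :=
              mul_le_mul hg1 hv1 (norm_nonneg _) (by positivity)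
        _ ≤ ‖(n : ℝ)‖ * ‖(n : ℝ)‖ := by simp
      · simp [hgf, Set.indicator_of_notMem hx]
    have hGL2 : MemLp (fun x => ((g x).toReal : ℂ) * gf x) 2 μ :=
      MemLp.of_le (memLp_indicator_const 2 hAm0 ((n : ℝ) * n) (Or.inr hAfin)) hGms
        (Filter.Eventually.of_forall hGbound)
    have heq := hqn f gf hfL2 hWCE hGL2
    filter_upwards [heq] with x hx hxA
    simp only [hgf, Set.indicator_of_mem hxA] at hx
    exact hx.symm
  have hcov : ∀ᵐ x ∂μ, ∃ n, x ∈ S n := by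
    filter_upwards [hgfin] with x hgx
    have hx0 : x ∈ ⋃ n, spanningSets (μ.trim hm) n := by
      rw [iUnion_spanningSets]; exact Set.mem_univ x
    obtain ⟨n₀, hn₀⟩ := Set.mem_iUnion.mp hx0
    obtain ⟨n₁, hn₁⟩ := ENNReal.exists_nat_gt hgx.ne
    obtain ⟨n₂, hn₂⟩ := exists_nat_ge ‖v x‖
    refine ⟨n₀ ⊔ n₁ ⊔ n₂, ⟨⟨?_, ?_⟩, ?_⟩⟩
    · exact monotone_spanningSets (μ.trim hm)
        (le_sup_of_le_left le_sup_left) hn₀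
    · exact le_trans hn₁.le (Nat.cast_le.mpr (le_sup_of_le_left le_sup_right))
    · exact le_trans hn₂ (Nat.cast_le.mpr le_sup_right)
  filter_upwards [ae_all_iff.mpr key, hcov] with x hx hnx hvx
  obtain ⟨n, hn⟩ := hnx
  exact mul_right_cancel₀ hvx (hx n hn)
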